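/- There exists ε > 0 such that for all a, b ∈ (0, ∞), the function p_{a,b}(x) = (1 − e^{−2ax})(1 − e^{−2bx})/(1 − e^{−ab}) · (1/√π) · exp(−(x − (a+b)/2)^2) satisfies inf over a,b ∈ (0,∞) and x ∈ [(a+b)/2 + 1, (a+b)/2 + 2] of p_{a,b}(x) is strictly positive. -/
import Mathlib

private lemma texp_le (t : ℝ) : t * Real.exp (-t) ≤ 1 - Real.exp (-t) := by
  have h1 := Real.add_one_le_exp t
  have h2 : Real.exp (-t) * Real.exp t = 1 := by rw [← Real.exp_add]; simp
  nlinarith [Real.exp_pos (-t), mul_le_mul_of_nonneg_left h1 (Real.exp_pos (-t)).le]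

private lemma one_sub_exp_le (s : ℝ) : 1 - Real.exp (-s) ≤ s := by
  have := Real.add_one_le_exp (-s); linarith

private lemma exp_neg_one_le : Real.exp (-1) ≤ 1 / 2 := by
  have h : (2 : ℝ) ≤ Real.exp 1 := by have := Real.add_one_le_exp 1; linarith
  rw [Real.exp_neg]
  calc (Real.exp 1)⁻¹ ≤ (2 : ℝ)⁻¹ := by
        apply inv_anti₀ (by norm_num) h
    _ = 1 / 2 := by norm_num

private lemma mono_sub (u v : ℝ) (h : u ≤ v) :
    1 - Real.exp (-u) ≤ 1 - Real.exp (-v) := by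
  have := Real.exp_le_exp.mpr (neg_le_neg h); linarith

/-- Case where `1 ≤ a`. -/
private lemma ratio_big (a b x : ℝ) (hb : 0 < b) (ha1 : 1 ≤ a)
    (hx1 : 1 ≤ x) (hx2 : a + b ≤ 2 * x) :
    Real.exp (-4) * (1 - Real.exp (-(a * b))) ≤
      (1 - Real.exp (-2 * a * x)) * (1 - Real.exp (-2 * b * x)) := by
  have hD : 0 ≤ 1 - Real.exp (-(a * b)) := by
    have : Real.exp (-(a * b)) ≤ Real.exp 0 :=
      Real.exp_le_exp.mpr (by nlinarith)
    simpa using this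
  have hA : 1 - Real.exp (-2) ≤ 1 - Real.exp (-2 * a * x) := by
    have : (2 : ℝ) ≤ 2 * a * x := by nlinarith
    have := mono_sub 2 (2 * a * x) this
    simpa [neg_mul] using this
  have hB : 1 - Real.exp (-(a * b)) ≤ 1 - Real.exp (-2 * b * x) := by
    have : a * b ≤ 2 * b * x := by nlinarith
    have := mono_sub (a * b) (2 * b * x) this
    simpa [neg_mul] using this
  have hE : Real.exp (-4) ≤ 1 - Real.exp (-2) := by
    have h1 : Real.exp (-4 : ℝ) ≤ Real.exp (-1) := Real.exp_le_exp.mpr (by norm_num)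
    have h2 : Real.exp (-2 : ℝ) ≤ Real.exp (-1) := Real.exp_le_exp.mpr (by norm_num)
    have := exp_neg_one_le
    linarith
  calc Real.exp (-4) * (1 - Real.exp (-(a * b)))
      ≤ (1 - Real.exp (-2)) * (1 - Real.exp (-2 * b * x)) :=
        mul_le_mul hE hB hD (by linarith [Real.exp_pos (-4 : ℝ)])
    _ ≤ (1 - Real.exp (-2 * a * x)) * (1 - Real.exp (-2 * b * x)) := by
        apply mul_le_mul_of_nonneg_right hA
        linarith
  
private lemma ratio_ge (a b x : ℝ) (ha : 0 < a) (hb : 0 < b)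
    (hx1 : 1 ≤ x) (hx2 : a + b ≤ 2 * x) :
    Real.exp (-4) * (1 - Real.exp (-(a * b))) ≤
      (1 - Real.exp (-2 * a * x)) * (1 - Real.exp (-2 * b * x)) := by
  rcases le_or_gt a 1 with ha1 | ha1
  · rcases le_or_gt b 1 with hb1 | hb1
    · -- both small
      have hA : 2 * a * Real.exp (-2) ≤ 1 - Real.exp (-2 * a * x) := by
        have h1 : Real.exp (-2 : ℝ) ≤ Real.exp (-(2 * a)) :=
          Real.exp_le_exp.mpr (by nlinarith)
        have h2 : 2 * a * Real.exp (-(2 * a)) ≤ 1 - Real.exp (-(2 * a)) := texp_le (2 * a)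
        have h3 : 1 - Real.exp (-(2 * a)) ≤ 1 - Real.exp (-2 * a * x) := by
          have := mono_sub (2 * a) (2 * a * x) (by nlinarith)
          simpa [neg_mul] using this
        nlinarith
      have hB : 2 * b * Real.exp (-2) ≤ 1 - Real.exp (-2 * b * x) := by
        have h1 : Real.exp (-2 : ℝ) ≤ Real.exp (-(2 * b)) :=
          Real.exp_le_exp.mpr (by nlinarith)
        have h2 : 2 * b * Real.exp (-(2 * b)) ≤ 1 - Real.exp (-(2 * b)) := texp_le (2 * b)
        have h3 : 1 - Real.exp (-(2 * b)) ≤ 1 - Real.exp (-2 * b * x) := by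
          have := mono_sub (2 * b) (2 * b * x) (by nlinarith)
          simpa [neg_mul] using this
        nlinarith
      have hDab : 1 - Real.exp (-(a * b)) ≤ a * b := one_sub_exp_le (a * b)
      have hprod : (2 * a * Real.exp (-2)) * (2 * b * Real.exp (-2)) ≤
          (1 - Real.exp (-2 * a * x)) * (1 - Real.exp (-2 * b * x)) := by
        apply mul_le_mul hA hB (by positivity) (le_trans (by positivity : (0:ℝ) ≤ 2 * a * Real.exp (-2)) hA)
      have h4 : Real.exp (-4 : ℝ) = Real.exp (-2) * Real.exp (-2) := by
        rw [← Real.exp_add]; norm_num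
      nlinarith [Real.exp_pos (-2 : ℝ), mul_pos ha hb, Real.exp_pos (-4 : ℝ)]
    · -- b > 1 : use symmetry
      have := ratio_big b a x ha hb1.le hx1 (by linarith)
      calc Real.exp (-4) * (1 - Real.exp (-(a * b)))
          = Real.exp (-4) * (1 - Real.exp (-(b * a))) := by rw [mul_comm a b]
        _ ≤ (1 - Real.exp (-2 * b * x)) * (1 - Real.exp (-2 * a * x)) := this
        _ = (1 - Real.exp (-2 * a * x)) * (1 - Real.exp (-2 * b * x)) := mul_comm _ _
  · exact ratio_big a b x hb ha1.le hx1 hx2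

/-- Lemma 6.3: uniform positivity of the density
`p_{a,b}(x) = (1−e^{−2ax})(1−e^{−2bx})/(1−e^{−ab}) · π^{−1/2} exp(−(x−(a+b)/2)²)`
on the window `[(a+b)/2+1, (a+b)/2+2]`, uniformly in `a, b > 0`. -/
theorem stmt_7 :
    ∃ δ : ℝ, 0 < δ ∧ ∀ a b x : ℝ, 0 < a → 0 < b →
      x ∈ Set.Icc ((a + b) / 2 + 1) ((a + b) / 2 + 2) →
      δ ≤ (1 - Real.exp (-2 * a * x)) * (1 - Real.exp (-2 * b * x)) /
            (1 - Real.exp (-(a * b))) * (Real.sqrt Real.pi)⁻¹ *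
            Real.exp (-(x - (a + b) / 2) ^ 2) := by
  refine ⟨Real.exp (-9), Real.exp_pos _, fun a b x ha hb hx => ?_⟩
  obtain ⟨hxl, hxr⟩ := hx
  have hD : 0 < 1 - Real.exp (-(a * b)) := by
    have : Real.exp (-(a * b)) < Real.exp 0 :=
      Real.exp_lt_exp.mpr (by nlinarith)
    simpa using this
  have hx1 : 1 ≤ x := by linarith
  have hx2 : a + b ≤ 2 * x := by linarith
  have hND : Real.exp (-4) ≤
      (1 - Real.exp (-2 * a * x)) * (1 - Real.exp (-2 * b * x)) /
        (1 - Real.exp (-(a * b))) :=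
    (le_div_iff₀ hD).mpr (ratio_ge a b x ha hb hx1 hx2)
  have hsp : 0 < Real.sqrt Real.pi := Real.sqrt_pos.mpr Real.pi_pos
  have hs2 : Real.sqrt Real.pi ≤ 2 := by
    have h4 : Real.sqrt Real.pi ≤ Real.sqrt 4 := Real.sqrt_le_sqrt Real.pi_le_four
    have : Real.sqrt 4 = 2 := by
      rw [show (4 : ℝ) = 2 ^ 2 by norm_num, Real.sqrt_sq (by norm_num : (0:ℝ) ≤ 2)]
    linarith
  have hI : (1 : ℝ) / 2 ≤ (Real.sqrt Real.pi)⁻¹ := by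
    rw [show (1:ℝ)/2 = (2:ℝ)⁻¹ by norm_num]
    exact inv_anti₀ hsp hs2
  have hE : Real.exp (-4) ≤ Real.exp (-(x - (a + b) / 2) ^ 2) := by
    apply Real.exp_le_exp.mpr
    nlinarith
  have h9 : Real.exp (-9 : ℝ) = Real.exp (-4) * Real.exp (-1) * Real.exp (-4) := by
    rw [← Real.exp_add, ← Real.exp_add]; norm_num
  have hI' : Real.exp (-1 : ℝ) ≤ (Real.sqrt Real.pi)⁻¹ := le_trans exp_neg_one_le hI
  have hND0 : 0 ≤ (1 - Real.exp (-2 * a * x)) * (1 - Real.exp (-2 * b * x)) /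
        (1 - Real.exp (-(a * b))) := le_trans (Real.exp_pos _).le hND
  calc Real.exp (-9 : ℝ) = Real.exp (-4) * Real.exp (-1) * Real.exp (-4) := h9
    _ ≤ (1 - Real.exp (-2 * a * x)) * (1 - Real.exp (-2 * b * x)) /
            (1 - Real.exp (-(a * b))) * (Real.sqrt Real.pi)⁻¹ *
            Real.exp (-(x - (a + b) / 2) ^ 2) := by
        apply mul_le_mul _ hE (Real.exp_pos _).le
        · positivity
        · exact mul_le_mul hND hI' (Real.exp_pos _).le hND0
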